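/- Two partial automorphisms α, β of the path P_n are J-related in PAut(P_n) if and only if the multiset of sizes of the maximal intervals of Im α equals the multiset of sizes of the maximal intervals of Im β. -/

import Mathlib

open scoped Classical

/-- `adj u v` means `|u - v| = 1`, i.e. `u` and `v` are adjacent in the path. -/
def adj (u v : ℕ) : Prop := u + 1 = v ∨ v + 1 = u

/-- `f` is an injective partial endomorphism of the path `P_n` on `{1,…,n}`. -/
structure IsIEnd (n : ℕ) (f : ℕ →. ℕ) : Prop where
  dom_subset : f.Dom ⊆ Set.Icc 1 n
  ran_subset : f.ran ⊆ Set.Icc 1 n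
  inj : ∀ ⦃x y a : ℕ⦄, a ∈ f x → a ∈ f y → x = y
  edge : ∀ ⦃u v a b : ℕ⦄, a ∈ f u → b ∈ f v → adj u v → adj a b

/-- `f` is a partial automorphism of the path `P_n`. -/
def IsPAut (n : ℕ) (f : ℕ →. ℕ) : Prop :=
  IsIEnd n f ∧ ∀ ⦃u v a b : ℕ⦄, a ∈ f u → b ∈ f v → adj a b → adj u v

/-- Left-to-right composition of partial maps: `x (pcomp f g) = (x f) g`. -/
def pcomp (f g : ℕ →. ℕ) : ℕ →. ℕ := PFun.comp g f

/-- The inverse of an injective partial map. -/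
noncomputable def pinv (f : ℕ →. ℕ) : ℕ →. ℕ :=
  fun y => ⟨∃ x, y ∈ f x, fun h => h.choose⟩

/-- `I` is an interval of `X`: a set of consecutive integers contained in `X`. -/
def IsIntervalOf (I X : Set ℕ) : Prop :=
  I ⊆ X ∧ ∀ ⦃x⦄, x ∈ I → ∀ ⦃y⦄, y ∈ I → ∀ ⦃z : ℕ⦄, x < z → z < y → z ∈ I

/-- `I` is a maximal interval of `X`. -/
def IsMaxIntervalOf (I X : Set ℕ) : Prop :=
  IsIntervalOf I X ∧ ∀ J, IsIntervalOf J X → I ⊆ J → I = J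

/-! ### Basic lemmas on pcomp / pinv -/

lemma mem_pcomp {f g : ℕ →. ℕ} {x y : ℕ} :
    y ∈ pcomp f g x ↔ ∃ a, a ∈ f x ∧ y ∈ g a := by
  simp [pcomp, PFun.comp_apply, Part.mem_bind_iff]
  exact Part.mem_bind_iff

lemma mem_pinv_of {f : ℕ →. ℕ} {y z : ℕ} (h : z ∈ pinv f y) : y ∈ f z := by
  obtain ⟨h', rfl⟩ := Part.mem_mk_iff.1 h
  exact h'.choose_spec

lemma mem_pinv {f : ℕ →. ℕ} (hinj : ∀ ⦃x y a : ℕ⦄, a ∈ f x → a ∈ f y → x = y)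
    {y z : ℕ} : z ∈ pinv f y ↔ y ∈ f z := by
  refine ⟨mem_pinv_of, fun h => ?_⟩
  have hex : ∃ x, y ∈ f x := ⟨z, h⟩
  exact Part.mem_mk_iff.2 ⟨hex, hinj hex.choose_spec h⟩

lemma adj_symm {u v : ℕ} (h : adj u v) : adj v u := h.symm

lemma isPAut_pinv {n : ℕ} {f : ℕ →. ℕ} (hf : IsPAut n f) : IsPAut n (pinv f) := by
  obtain ⟨⟨hd, hr, hinj, hedge⟩, hco⟩ := hf
  have hm : ∀ {y z : ℕ}, z ∈ pinv f y ↔ y ∈ f z := fun {y z} => mem_pinv hinj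
  refine ⟨⟨?_, ?_, ?_, ?_⟩, ?_⟩
  · intro y hy
    rw [PFun.mem_dom] at hy
    obtain ⟨z, hz⟩ := hy
    exact hr ⟨z, hm.1 hz⟩
  · intro z hz
    obtain ⟨y, hy⟩ := hz
    exact hd ((PFun.mem_dom f z).2 ⟨y, hm.1 hy⟩)
  · intro x y a hax hay
    exact Part.mem_unique (hm.1 hax) (hm.1 hay)
  · intro u v a b ha hb huv
    exact hco (hm.1 ha) (hm.1 hb) huv
  · intro u v a b ha hb hab
    exact hedge (hm.1 ha) (hm.1 hb) hab

lemma isPAut_pcomp {n : ℕ} {f g : ℕ →. ℕ} (hf : IsPAut n f) (hg : IsPAut n g) :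
    IsPAut n (pcomp f g) := by
  obtain ⟨⟨hfd, hfr, hfinj, hfedge⟩, hfco⟩ := hf
  obtain ⟨⟨hgd, hgr, hginj, hgedge⟩, hgco⟩ := hg
  refine ⟨⟨?_, ?_, ?_, ?_⟩, ?_⟩
  · intro x hx
    rw [PFun.mem_dom] at hx
    obtain ⟨y, hy⟩ := hx
    obtain ⟨a, haf, -⟩ := mem_pcomp.1 hy
    exact hfd ((PFun.mem_dom f x).2 ⟨a, haf⟩)
  · intro y hy
    obtain ⟨x, hx⟩ := hy
    obtain ⟨a, -, hag⟩ := mem_pcomp.1 hx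
    exact hgr ⟨a, hag⟩
  · intro x y a hax hay
    obtain ⟨a1, ha1, hb1⟩ := mem_pcomp.1 hax
    obtain ⟨a2, ha2, hb2⟩ := mem_pcomp.1 hay
    have : a1 = a2 := hginj hb1 hb2
    subst this
    exact hfinj ha1 ha2
  · intro u v a b ha hb huv
    obtain ⟨a1, ha1, hb1⟩ := mem_pcomp.1 ha
    obtain ⟨a2, ha2, hb2⟩ := mem_pcomp.1 hb
    exact hgedge hb1 hb2 (hfedge ha1 ha2 huv)
  · intro u v a b ha hb hab
    obtain ⟨a1, ha1, hb1⟩ := mem_pcomp.1 ha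
    obtain ⟨a2, ha2, hb2⟩ := mem_pcomp.1 hb
    exact hfco ha1 ha2 (hgco hb1 hb2 hab)

/-! ### Runs (maximal blocks of consecutive integers) -/

def RunB (X : Set ℕ) (a b : ℕ) : Prop :=
  Set.Icc a b ⊆ X ∧ (a - 1) ∉ X ∧ (b + 1) ∉ X

lemma run_exists {n : ℕ} {X : Set ℕ} (hX : X ⊆ Set.Icc 1 n) {x : ℕ} (hx : x ∈ X) :
    ∃ a b, a ≤ x ∧ x ≤ b ∧ RunB X a b := by
  have hx1 : 1 ≤ x := (hX hx).1
  have h0 : (0 : ℕ) ∉ X := fun h => by simpa using (hX h).1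
  have hexb : ∃ k, x + k + 1 ∉ X := ⟨n, fun h => by have := (hX h).2; omega⟩
  have hbmem : ∀ j, j ≤ Nat.find hexb → x + j ∈ X := by
    intro j
    induction j with
    | zero => intro _; simpa using hx
    | succ m ih =>
      intro hj
      have hm := Nat.find_min hexb (show m < Nat.find hexb by omega)
      have : x + m + 1 ∈ X := not_not.1 hm
      exact this
  have hexa : ∃ k, x - k - 1 ∉ X := ⟨x - 1, by
    have : x - (x-1) - 1 = 0 := by omega
    rw [this]; exact h0⟩
  have hamem : ∀ j, j ≤ Nat.find hexa → x - j ∈ X := by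
    intro j
    induction j with
    | zero => intro _; simpa using hx
    | succ m ih =>
      intro hj
      have hm := Nat.find_min hexa (show m < Nat.find hexa by omega)
      have : x - m - 1 ∈ X := not_not.1 hm
      have he : x - (m+1) = x - m - 1 := by omega
      rw [he]; exact this
  refine ⟨x - Nat.find hexa, x + Nat.find hexb, by omega, by omega, ?_, ?_, ?_⟩
  · intro z hz
    obtain ⟨hz1, hz2⟩ := hz
    rcases le_or_gt z x with h | h
    · have : z = x - (x - z) := by omega
      rw [this]; exact hamem _ (by omega)
    · have : z = x + (z - x) := by omega
      rw [this]; exact hbmem _ (by omega)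
  · have h1 := Nat.find_spec hexa
    rcases le_or_gt (Nat.find hexa) x with h2 | h2
    · have : x - Nat.find hexa - 1 = x - (Nat.find hexa + 1) := by omega
      simpa [this] using (by simpa using h1 : x - (Nat.find hexa) - 1 ∉ X)
    · have : x - Nat.find hexa - 1 = 0 := by omega
      rw [this]; exact h0
  · have := Nat.find_spec hexb
    simpa using this

lemma run_unique {X : Set ℕ} {a b a' b' x : ℕ} (h : RunB X a b) (h' : RunB X a' b')
    (ha : a ≤ x) (hb : x ≤ b) (ha' : a' ≤ x) (hb' : x ≤ b') : a = a' ∧ b = b' := by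
  obtain ⟨hsub, hl, hr⟩ := h
  obtain ⟨hsub', hl', hr'⟩ := h'
  constructor
  · by_contra hne
    rcases Nat.lt_or_ge a a' with hlt | hge
    · exact hl' (hsub ⟨by omega, by omega⟩)
    · have : a' < a := by omega
      exact hl (hsub' ⟨by omega, by omega⟩)
  · by_contra hne
    rcases Nat.lt_or_ge b b' with hlt | hge
    · exact hr (hsub' ⟨by omega, by omega⟩)
    · have : b' < b := by omega
      exact hr' (hsub ⟨by omega, by omega⟩)

lemma run_isMaxInterval {X : Set ℕ} {a b : ℕ} (hab : a ≤ b) (h : RunB X a b) :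
    IsMaxIntervalOf (Set.Icc a b) X := by
  obtain ⟨hsub, hl, hr⟩ := h
  refine ⟨⟨hsub, ?_⟩, ?_⟩
  · intro x hx y hy z hxz hzy
    exact ⟨le_trans hx.1 hxz.le, le_trans hzy.le hy.2⟩
  · intro J hJ hIJ
    apply Set.Subset.antisymm hIJ
    intro z hz
    by_contra hzI
    simp only [Set.mem_Icc, not_and_or, not_le] at hzI
    have haJ : a ∈ J := hIJ ⟨le_refl a, hab⟩
    have hbJ : b ∈ J := hIJ ⟨hab, le_refl b⟩
    rcases hzI with hza | hbz
    · rcases Nat.lt_or_ge z (a-1) with h1 | h2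
      · have : a - 1 ∈ J := hJ.2 hz hbJ (by omega) (by omega)
        exact hl (hJ.1 this)
      · have : z = a - 1 := by omega
        exact hl (this ▸ hJ.1 hz)
    · rcases Nat.lt_or_ge (b+1) z with h1 | h2
      · have : b + 1 ∈ J := hJ.2 haJ hz (by omega) h1
        exact hr (hJ.1 this)
      · have : z = b + 1 := by omega
        exact hr (this ▸ hJ.1 hz)

lemma maxInterval_nonempty_eq_run {n : ℕ} {X : Set ℕ} (hX : X ⊆ Set.Icc 1 n) {J : Set ℕ}
    (hJ : IsMaxIntervalOf J X) {x : ℕ} (hx : x ∈ J) :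
    ∃ a b, a ≤ x ∧ x ≤ b ∧ RunB X a b ∧ J = Set.Icc a b := by
  obtain ⟨a, b, ha, hb, hrun⟩ := run_exists hX (hJ.1.1 hx)
  refine ⟨a, b, ha, hb, hrun, ?_⟩
  have hIint : IsIntervalOf (Set.Icc a b) X := (run_isMaxInterval (le_trans ha hb) hrun).1
  have hunion : IsIntervalOf (J ∪ Set.Icc a b) X := by
    refine ⟨Set.union_subset hJ.1.1 hIint.1, ?_⟩
    intro u hu v hv z huz hzv
    have hxI : x ∈ Set.Icc a b := ⟨ha, hb⟩
    rcases Nat.lt_trichotomy z x with hzx | hzx | hzx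
    · rcases hu with hu | hu
      · exact Or.inl (hJ.1.2 hu hx huz hzx)
      · exact Or.inr (hIint.2 hu hxI huz hzx)
    · subst hzx; exact Or.inl hx
    · rcases hv with hv | hv
      · exact Or.inl (hJ.1.2 hx hv hzx hzv)
      · exact Or.inr (hIint.2 hxI hv hzx hzv)
  have hJeq : J = J ∪ Set.Icc a b := hJ.2 _ hunion Set.subset_union_left
  have hIsubJ : Set.Icc a b ⊆ J := by
    rw [hJeq]; exact Set.subset_union_right
  exact ((run_isMaxInterval (le_trans ha hb) hrun).2 J hJ.1 hIsubJ).symm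

lemma maxInterval_empty_iff {n : ℕ} {X : Set ℕ} (hX : X ⊆ Set.Icc 1 n) :
    IsMaxIntervalOf (∅ : Set ℕ) X ↔ X = ∅ := by
  constructor
  · intro h
    by_contra hne
    obtain ⟨x, hx⟩ := Set.nonempty_iff_ne_empty.2 hne
    obtain ⟨a, b, ha, hb, hrun⟩ := run_exists hX hx
    have := h.2 (Set.Icc a b) (run_isMaxInterval (le_trans ha hb) hrun).1 (Set.empty_subset _)
    have hxI : x ∈ Set.Icc a b := ⟨ha, hb⟩
    rw [← this] at hxI
    exact hxI
  · rintro rfl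
    refine ⟨⟨Set.empty_subset _, by simp⟩, fun J hJ _ => ?_⟩
    exact (Set.subset_empty_iff.1 hJ.1).symm

lemma icc_eq_icc {a b c d : ℕ} (hab : a ≤ b) (h : Set.Icc a b = Set.Icc c d) :
    a = c ∧ b = d := by
  have ha : a ∈ Set.Icc c d := by rw [← h]; exact ⟨le_refl a, hab⟩
  have hb : b ∈ Set.Icc c d := by rw [← h]; exact ⟨hab, le_refl b⟩
  have hcd : c ≤ d := le_trans (Set.mem_Icc.1 ha).1 (Set.mem_Icc.1 ha).2
  have hc : c ∈ Set.Icc a b := by rw [h]; exact ⟨le_refl c, hcd⟩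
  have hd : d ∈ Set.Icc a b := by rw [h]; exact ⟨hcd, le_refl d⟩
  obtain ⟨h1, h2⟩ := Set.mem_Icc.1 ha
  obtain ⟨h3, h4⟩ := Set.mem_Icc.1 hb
  obtain ⟨h5, h6⟩ := Set.mem_Icc.1 hc
  obtain ⟨h7, h8⟩ := Set.mem_Icc.1 hd
  omega

lemma ncard_Icc (a b : ℕ) : (Set.Icc a b).ncard = b + 1 - a := by
  rw [← Nat.card_coe_set_eq, Nat.card_eq_fintype_card]
  simpa using Nat.card_Icc a b

/-! ### Rigidity of partial automorphisms on intervals -/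

lemma rigid {n : ℕ} {f : ℕ →. ℕ} (hf : IsPAut n f) {a : ℕ} (k : ℕ)
    (hd : ∀ i, i ≤ k → (a + i) ∈ f.Dom) :
    ∃ v, v ∈ f a ∧ ((∀ i, i ≤ k → v + i ∈ f (a + i)) ∨
      (∀ i, i ≤ k → i ≤ v ∧ v - i ∈ f (a + i))) := by
  induction k with
  | zero =>
    obtain ⟨v, hv⟩ := (PFun.mem_dom f a).1 (by simpa using hd 0 (le_refl 0))
    refine ⟨v, hv, Or.inl ?_⟩
    intro i hi
    interval_cases i
    simpa using hv
  | succ k ih =>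
    obtain ⟨v, hv, hbr⟩ := ih (fun i hi => hd i (by omega))
    obtain ⟨w, hw⟩ := (PFun.mem_dom f (a + (k+1))).1 (hd (k+1) (le_refl _))
    rcases hbr with hL | hR
    · have hvk : v + k ∈ f (a + k) := hL k (le_refl k)
      have hadj : adj (v + k) w := hf.1.edge hvk hw (Or.inl (by omega))
      rcases hadj with h1 | h1
      · -- w = v + k + 1
        refine ⟨v, hv, Or.inl ?_⟩
        intro i hi
        rcases Nat.lt_or_ge i (k+1) with h2 | h2
        · exact hL i (by omega)
        · have : i = k + 1 := by omega
          subst this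
          have : v + (k+1) = w := by omega
          rw [this, show a + (k+1) = a + (k+1) from rfl]
          exact hw
      · -- w + 1 = v + k
        rcases Nat.eq_zero_or_pos k with hk0 | hkpos
        · subst hk0
          refine ⟨v, hv, Or.inr ?_⟩
          intro i hi
          interval_cases i
          · exact ⟨by omega, by simpa using hv⟩
          · exact ⟨by omega, by rw [show v - 1 = w by omega]; exact hw⟩
        · exfalso
          have hprev : v + (k-1) ∈ f (a + (k-1)) := hL (k-1) (by omega)
          have : w = v + (k-1) := by omega
          rw [this] at hw
          have := hf.1.inj hw hprev
          omega
    · have hvk : k ≤ v ∧ v - k ∈ f (a + k) := hR k (le_refl k)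
      have hadj : adj (v - k) w := hf.1.edge hvk.2 hw (Or.inl (by omega))
      rcases hadj with h1 | h1
      · -- w = v - k + 1
        rcases Nat.eq_zero_or_pos k with hk0 | hkpos
        · subst hk0
          refine ⟨v, hv, Or.inl ?_⟩
          intro i hi
          interval_cases i
          · simpa using hv
          · rw [show v + 1 = w by omega]
            exact hw
        · exfalso
          have hprev : k - 1 ≤ v ∧ v - (k-1) ∈ f (a + (k-1)) := hR (k-1) (by omega)
          have : w = v - (k-1) := by omega
          rw [this] at hw
          have := hf.1.inj hw hprev.2
          omega
      · -- w + 1 = v - k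
        refine ⟨v, hv, Or.inr ?_⟩
        intro i hi
        rcases Nat.lt_or_ge i (k+1) with h2 | h2
        · exact hR i (by omega)
        · have : i = k + 1 := by omega
          subst this
          refine ⟨by omega, ?_⟩
          rw [show v - (k+1) = w by omega]
          exact hw

/-! ### Counting intervals -/

def cset (X : Set ℕ) (k : ℕ) : Set ℕ := {a | Set.Icc a (a + k) ⊆ X}

def dset (X : Set ℕ) (k : ℕ) : Set ℕ :=
  {a | Set.Icc a (a + k) ⊆ X ∧ a + k + 1 ∉ X}

def nset (X : Set ℕ) (k : ℕ) : Set ℕ := {a | RunB X a (a + k)}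

lemma cset_subset {n : ℕ} {X : Set ℕ} (hX : X ⊆ Set.Icc 1 n) (k : ℕ) :
    cset X k ⊆ Set.Icc 1 n := by
  intro a ha
  exact hX (ha ⟨le_refl a, by omega⟩)

lemma cset_finite {n : ℕ} {X : Set ℕ} (hX : X ⊆ Set.Icc 1 n) (k : ℕ) :
    (cset X k).Finite :=
  Set.Finite.subset (Set.finite_Icc 1 n) (cset_subset hX k)

lemma dset_finite {n : ℕ} {X : Set ℕ} (hX : X ⊆ Set.Icc 1 n) (k : ℕ) :
    (dset X k).Finite :=
  Set.Finite.subset (cset_finite hX k) (fun a ha => ha.1)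

lemma nset_finite {n : ℕ} {X : Set ℕ} (hX : X ⊆ Set.Icc 1 n) (k : ℕ) :
    (nset X k).Finite :=
  Set.Finite.subset (cset_finite hX k) (fun a ha => ha.1)

lemma cset_split {X : Set ℕ} (k : ℕ) :
    cset X k = cset X (k+1) ∪ dset X k := by
  ext a
  constructor
  · intro ha
    by_cases h : a + k + 1 ∈ X
    · left
      intro z hz
      rcases Nat.lt_or_ge z (a + k + 1) with h1 | h1
      · exact ha ⟨hz.1, by omega⟩
      · have : z = a + k + 1 := by have := hz.2; omega
        rw [this]; exact h
    · exact Or.inr ⟨ha, h⟩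
  · rintro (ha | ha)
    · exact fun z hz => ha ⟨hz.1, le_trans hz.2 (by omega)⟩
    · exact ha.1

lemma cset_eq_card {n : ℕ} {X : Set ℕ} (hX : X ⊆ Set.Icc 1 n) (k : ℕ) :
    (cset X k).ncard = (cset X (k+1)).ncard + (dset X k).ncard := by
  rw [cset_split (X := X) k]
  refine Set.ncard_union_eq ?_ (cset_finite hX (k+1)) (dset_finite hX k)
  rw [Set.disjoint_left]
  intro a h1 h2
  exact h2.2 (h1 ⟨by omega, by omega⟩)

lemma dset_split_card {n : ℕ} {X : Set ℕ} (hX : X ⊆ Set.Icc 1 n) (k : ℕ) :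
    (dset X k).ncard = (dset X (k+1)).ncard + (nset X k).ncard := by
  have hkey : dset X k = (fun a => a + 1) '' (dset X (k+1)) ∪ nset X k := by
    ext a
    constructor
    · intro ha
      by_cases h : a - 1 ∈ X
      · left
        have ha1 : 1 ≤ a := (hX (ha.1 ⟨le_refl a, by omega⟩)).1
        refine ⟨a - 1, ⟨?_, ?_⟩, by show a - 1 + 1 = a; omega⟩
        · intro z hz
          rcases Nat.lt_or_ge z a with h1 | h1
          · have : z = a - 1 := by
              have h2 := hz.1; have h3 := hz.2; omega
            rw [this]; exact h
          · refine ha.1 ⟨h1, ?_⟩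
            have h3 := hz.2; omega
        · have : a - 1 + (k+1) + 1 = a + k + 1 := by omega
          rw [this]; exact ha.2
      · exact Or.inr ⟨ha.1, h, ha.2⟩
    · rintro (⟨a', ha', rfl⟩ | ha)
      · show a' + 1 ∈ dset X k
        refine ⟨fun z hz => ha'.1 ⟨by have := hz.1; omega, by have := hz.2; omega⟩, ?_⟩
        have : a' + 1 + k + 1 = a' + (k+1) + 1 := by omega
        rw [this]; exact ha'.2
      · exact ⟨ha.1, ha.2.2⟩
  rw [hkey]
  have himg : ((fun a => a + 1) '' (dset X (k+1))).ncard = (dset X (k+1)).ncard :=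
    Set.ncard_image_of_injective _ (fun x y h => by omega)
  rw [← himg]
  refine Set.ncard_union_eq ?_ ((dset_finite hX (k+1)).image _) (nset_finite hX k)
  rw [Set.disjoint_left]
  rintro a ⟨a', ha', rfl⟩ h2
  have hmem : a' + 1 - 1 ∈ X := by
    have he : a' + 1 - 1 = a' := by omega
    rw [he]; exact ha'.1 ⟨le_refl a', by omega⟩
  exact h2.2.1 hmem

/-! ### The key counting inequality -/

lemma cset_ncard_le {n : ℕ} {X Y : Set ℕ} {g : ℕ →. ℕ} (hg : IsPAut n g)
    (hX : X ⊆ Set.Icc 1 n) (hY : Y ⊆ Set.Icc 1 n)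
    (hXY : ∀ x ∈ X, ∃ c, c ∈ g x ∧ c ∈ Y) (k : ℕ) :
    (cset X k).ncard ≤ (cset Y k).ncard := by
  -- property of a matched start
  set P : ℕ → ℕ → Prop := fun a a' =>
    (∀ w ∈ Set.Icc a' (a' + k), ∃ x, x ∈ Set.Icc a (a + k) ∧ w ∈ g x) ∧
    (∃ w, w ∈ g (a + k) ∧ w ∈ Set.Icc a' (a' + k)) ∧
    Set.Icc a' (a' + k) ⊆ Y with hP
  have hPex : ∀ a ∈ cset X k, ∃ a', P a a' := by
    intro a ha
    have hdom : ∀ i, i ≤ k → (a + i) ∈ g.Dom := by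
      intro i hi
      obtain ⟨c, hc, -⟩ := hXY (a + i) (ha ⟨by omega, by omega⟩)
      exact (PFun.mem_dom g (a+i)).2 ⟨c, hc⟩
    have hval : ∀ i, i ≤ k → ∀ w, w ∈ g (a + i) → w ∈ Y := by
      intro i hi w hw
      obtain ⟨c, hc, hcY⟩ := hXY (a + i) (ha ⟨by omega, by omega⟩)
      rwa [Part.mem_unique hw hc]
    obtain ⟨v, hv, hbr⟩ := rigid hg k hdom
    rcases hbr with hL | hR
    · refine ⟨v, ?_, ⟨v + k, hL k (le_refl k), ⟨by omega, by omega⟩⟩, ?_⟩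
      · intro w hw
        obtain ⟨hw1, hw2⟩ := hw
        refine ⟨a + (w - v), ⟨by omega, by omega⟩, ?_⟩
        have hmem := hL (w - v) (by omega)
        rwa [show v + (w - v) = w by omega] at hmem
      · intro w hw
        obtain ⟨hw1, hw2⟩ := hw
        have hmem := hL (w - v) (by omega)
        rw [show v + (w - v) = w by omega] at hmem
        exact hval (w - v) (by omega) w hmem
    · have hkv : k ≤ v := (hR k (le_refl k)).1
      refine ⟨v - k, ?_, ⟨v - k, (hR k (le_refl k)).2, ⟨le_refl _, by omega⟩⟩, ?_⟩
      · intro w hw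
        obtain ⟨hw1, hw2⟩ := hw
        have hwv : w ≤ v := by omega
        refine ⟨a + (v - w), ⟨by omega, by omega⟩, ?_⟩
        have hmem := (hR (v - w) (by omega)).2
        rwa [show v - (v - w) = w by omega] at hmem
      · intro w hw
        obtain ⟨hw1, hw2⟩ := hw
        have hwv : w ≤ v := by omega
        have hmem := (hR (v - w) (by omega)).2
        rw [show v - (v - w) = w by omega] at hmem
        exact hval (v - w) (by omega) w hmem
  choose hfun hfunP using fun a (ha : a ∈ cset X k) => hPex a ha
  -- we need a total function; use a dite
  set F : ℕ → ℕ := fun a => if ha : a ∈ cset X k then hfun a ha else 0 with hF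
  refine Set.ncard_le_ncard_of_injOn F ?_ ?_ (cset_finite hY k)
  · intro a ha
    rw [hF]
    simp only [ha, dif_pos]
    exact fun z hz => ((hfunP a ha).2.2) hz
  · intro a1 h1 a2 h2 heq
    rw [hF] at heq
    simp only [h1, h2, dif_pos] at heq
    by_contra hne
    obtain ⟨P1a, P1b, P1c⟩ := hfunP a1 h1
    obtain ⟨P2a, P2b, P2c⟩ := hfunP a2 h2
    rw [heq] at P1a
    rcases Nat.lt_or_ge a1 a2 with hlt | hge
    · -- value at a2 + k pulls back into Icc a1 (a1+k)
      obtain ⟨w, hw, hwI⟩ := P2b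
      obtain ⟨x, hxI, hxw⟩ := P1a w hwI
      have : x = a2 + k := hg.1.inj hxw hw
      have := hxI.2
      omega
    · have hlt : a2 < a1 := by omega
      obtain ⟨w, hw, hwI⟩ := P1b
      rw [heq] at hwI
      obtain ⟨x, hxI, hxw⟩ := P2a w hwI
      have : x = a1 + k := hg.1.inj hxw hw
      have := hxI.2
      omega

/-! ### Equal run counts from J-equivalence -/

lemma nset_ncard_eq {n : ℕ} {X Y : Set ℕ}
    (hX : X ⊆ Set.Icc 1 n) (hY : Y ⊆ Set.Icc 1 n)
    (hc : ∀ k, (cset X k).ncard = (cset Y k).ncard) :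
    ∀ k, (nset X k).ncard = (nset Y k).ncard := by
  have hd : ∀ k, (dset X k).ncard = (dset Y k).ncard := by
    intro k
    have h1 := cset_eq_card hX k
    have h2 := cset_eq_card hY k
    have h3 := hc k
    have h4 := hc (k+1)
    omega
  intro k
  have h1 := dset_split_card hX k
  have h2 := dset_split_card hY k
  have h3 := hd k
  have h4 := hd (k+1)
  omega

/-- From equal ncard of finite sets, a bijection. -/
lemma exists_bijOn_of_ncard_eq {S T : Set ℕ} (hS : S.Finite) (hT : T.Finite)
    (h : S.ncard = T.ncard) : ∃ f : ℕ → ℕ, Set.BijOn f S T := by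
  refine Set.Finite.exists_bijOn_of_encard_eq hS ?_
  rw [← hS.cast_ncard_eq, ← hT.cast_ncard_eq, h]

/-! ### Building the interval bijection -/

lemma maxInterval_structure {n : ℕ} {X : Set ℕ} (hX : X ⊆ Set.Icc 1 n) {J : Set ℕ}
    (hJ : IsMaxIntervalOf J X) (hne : J.Nonempty) :
    ∃ a k, J = Set.Icc a (a + k) ∧ a ∈ nset X k ∧ sInf J = a ∧ J.ncard = k + 1 := by
  obtain ⟨x, hx⟩ := hne
  obtain ⟨a, b, ha, hb, hrun, hJeq⟩ := maxInterval_nonempty_eq_run hX hJ hx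
  have hab : a ≤ b := le_trans ha hb
  refine ⟨a, b - a, ?_, ?_, ?_, ?_⟩
  · rw [show a + (b - a) = b by omega]; exact hJeq
  · show RunB X a (a + (b - a))
    rw [show a + (b - a) = b by omega]
    exact hrun
  · have haJ : a ∈ J := by rw [hJeq]; exact ⟨le_refl a, hab⟩
    apply le_antisymm (Nat.sInf_le haJ)
    have hs : sInf J ∈ J := Nat.sInf_mem ⟨a, haJ⟩
    have hs2 : sInf J ∈ Set.Icc a b := by rw [← hJeq]; exact hs
    exact hs2.1
  · rw [hJeq, ncard_Icc]; omega

lemma empty_of_nset {n : ℕ} {X Y : Set ℕ} (hY : Y ⊆ Set.Icc 1 n)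
    (hn : ∀ k, (nset X k).ncard = (nset Y k).ncard) (hXe : X = ∅) : Y = ∅ := by
  by_contra hne
  obtain ⟨y, hy⟩ := Set.nonempty_iff_ne_empty.2 hne
  obtain ⟨a, b, ha, hb, hrun⟩ := run_exists hY hy
  have hmem : a ∈ nset Y (b - a) := by
    show RunB Y a (a + (b - a))
    rw [show a + (b - a) = b by omega]
    exact hrun
  have hposY : 0 < (nset Y (b - a)).ncard :=
    (Set.ncard_pos (nset_finite hY _)).2 ⟨a, hmem⟩
  have hXz : nset X (b - a) = ∅ := by
    ext c
    simp only [Set.mem_empty_iff_false, iff_false]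
    intro hc
    have : c ∈ X := hc.1 ⟨le_refl c, by omega⟩
    rw [hXe] at this
    exact this
  rw [← hn (b - a), hXz] at hposY
  simp at hposY

lemma sigma_exists {n : ℕ} {X Y : Set ℕ} (hX : X ⊆ Set.Icc 1 n) (hY : Y ⊆ Set.Icc 1 n)
    (hn : ∀ k, (nset X k).ncard = (nset Y k).ncard) :
    ∃ σ : Set ℕ → Set ℕ,
      (∀ J, IsMaxIntervalOf J X → IsMaxIntervalOf (σ J) Y) ∧
      (∀ J', IsMaxIntervalOf J' Y → ∃! J, IsMaxIntervalOf J X ∧ σ J = J') ∧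
      (∀ J, IsMaxIntervalOf J X → J.ncard = (σ J).ncard) := by
  have hbij : ∀ k, ∃ f : ℕ → ℕ, Set.BijOn f (nset X k) (nset Y k) := fun k =>
    exists_bijOn_of_ncard_eq (nset_finite hX k) (nset_finite hY k) (hn k)
  choose e he using hbij
  refine ⟨fun J => if J.Nonempty then
      Set.Icc (e (J.ncard - 1) (sInf J)) (e (J.ncard - 1) (sInf J) + (J.ncard - 1))
    else ∅, ?_, ?_, ?_⟩
  · intro J hJ
    by_cases hne : J.Nonempty
    · obtain ⟨a, k, hJeq, hna, hsInf, hcard⟩ := maxInterval_structure hX hJ hne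
      simp only [hne, if_pos, hsInf, hcard, Nat.add_sub_cancel]
      exact run_isMaxInterval (by omega) ((he k).mapsTo hna)
    · have hXe : X = ∅ := by
        rw [Set.not_nonempty_iff_eq_empty] at hne
        exact (maxInterval_empty_iff hX).1 (hne ▸ hJ)
      have hYe : Y = ∅ := empty_of_nset hY hn hXe
      simp only [hne, if_neg, if_false]
      rw [hYe]
      exact (maxInterval_empty_iff (n := n) (by simp)).2 rfl
  · intro J' hJ'
    by_cases hne' : J'.Nonempty
    · obtain ⟨a', k, hJ'eq, hna', hsInf', hcard'⟩ := maxInterval_structure hY hJ' hne'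
      obtain ⟨a, hna, hea⟩ := (he k).surjOn hna'
      have hJmax : IsMaxIntervalOf (Set.Icc a (a + k)) X :=
        run_isMaxInterval (by omega) hna
      have hIcc_ne : (Set.Icc a (a + k)).Nonempty := ⟨a, by simp⟩
      have hsInfI : sInf (Set.Icc a (a+k)) = a := by
        apply le_antisymm (Nat.sInf_le (by simp))
        have : sInf (Set.Icc a (a+k)) ∈ Set.Icc a (a+k) := Nat.sInf_mem hIcc_ne
        exact this.1
      have hcardI : (Set.Icc a (a+k)).ncard = k + 1 := by rw [ncard_Icc]; omega
      refine ⟨Set.Icc a (a + k), ⟨hJmax, ?_⟩, ?_⟩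
      · simp only [hIcc_ne, if_pos, hsInfI, hcardI, Nat.add_sub_cancel, hea]
        exact hJ'eq.symm
      · rintro J ⟨hJmax2, hJσ⟩
        have hneJ : J.Nonempty := by
          by_contra hc
          rw [Set.not_nonempty_iff_eq_empty] at hc
          subst hc
          simp only [Set.not_nonempty_empty, if_neg, if_false] at hJσ
          obtain ⟨y, hy⟩ := hne'
          rw [← hJσ] at hy
          exact hy
        obtain ⟨a1, k1, hJeq1, hna1, hsInf1, hcard1⟩ := maxInterval_structure hX hJmax2 hneJ
        simp only [hneJ, if_pos, hsInf1, hcard1, Nat.add_sub_cancel] at hJσ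
        rw [hJ'eq] at hJσ
        obtain ⟨he1, he2⟩ := icc_eq_icc (by omega) hJσ
        have hk1 : k1 = k := by omega
        rw [hk1] at hna1 he1 hJeq1
        have : a1 = a := (he k).injOn hna1 hna (he1.trans hea.symm)
        rw [hJeq1, this]
    · have hYe : Y = ∅ := by
        rw [Set.not_nonempty_iff_eq_empty] at hne'
        exact (maxInterval_empty_iff hY).1 (hne' ▸ hJ')
      have hXe : X = ∅ := empty_of_nset hX (fun k => (hn k).symm) hYe
      have hJ'empty : J' = ∅ := Set.not_nonempty_iff_eq_empty.1 hne'
      refine ⟨∅, ⟨?_, ?_⟩, ?_⟩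
      · rw [hXe]
        exact (maxInterval_empty_iff (n := n) (by simp)).2 rfl
      · simp only [Set.not_nonempty_empty, if_neg, if_false]
        exact hJ'empty.symm
      · rintro J ⟨hJmax2, -⟩
        have := hJmax2.1.1
        rw [hXe, Set.subset_empty_iff] at this
        exact this
  · intro J hJ
    by_cases hne : J.Nonempty
    · obtain ⟨a, k, hJeq, hna, hsInf, hcard⟩ := maxInterval_structure hX hJ hne
      simp only [hne, if_pos, hsInf, hcard, Nat.add_sub_cancel]
      rw [ncard_Icc]
      omega
    · simp only [hne, if_neg, if_false]
      rw [Set.not_nonempty_iff_eq_empty] at hne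
      subst hne
      simp

/-! ### The translation map between matched runs -/

noncomputable def runA (X : Set ℕ) (x : ℕ) : ℕ × ℕ :=
  Classical.epsilon (fun p : ℕ × ℕ => p.1 ≤ x ∧ x ≤ p.2 ∧ RunB X p.1 p.2)

lemma runA_spec {n : ℕ} {X : Set ℕ} (hX : X ⊆ Set.Icc 1 n) {x : ℕ} (hx : x ∈ X) :
    (runA X x).1 ≤ x ∧ x ≤ (runA X x).2 ∧ RunB X (runA X x).1 (runA X x).2 := by
  have h := run_exists hX hx
  obtain ⟨a, b, h1, h2, h3⟩ := h
  exact Classical.epsilon_spec (p := fun p : ℕ × ℕ => p.1 ≤ x ∧ x ≤ p.2 ∧ RunB X p.1 p.2)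
    ⟨(a, b), h1, h2, h3⟩

noncomputable def Tmap (X : Set ℕ) (σ : Set ℕ → Set ℕ) : ℕ →. ℕ :=
  fun x => ⟨x ∈ X, fun _ =>
    x - (runA X x).1 + sInf (σ (Set.Icc (runA X x).1 (runA X x).2))⟩

lemma sInf_Icc {a b : ℕ} (hab : a ≤ b) : sInf (Set.Icc a b) = a := by
  apply le_antisymm (Nat.sInf_le (Set.mem_Icc.2 ⟨le_refl a, hab⟩))
  have hs : sInf (Set.Icc a b) ∈ Set.Icc a b := Nat.sInf_mem ⟨a, Set.mem_Icc.2 ⟨le_refl a, hab⟩⟩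
  exact hs.1

section Tsec

variable {n : ℕ} {X Y : Set ℕ} {σ : Set ℕ → Set ℕ}

/-- master lemma about the matched runs -/
lemma run_match (hX : X ⊆ Set.Icc 1 n) (hY : Y ⊆ Set.Icc 1 n)
    (hσ1 : ∀ J, IsMaxIntervalOf J X → IsMaxIntervalOf (σ J) Y)
    (hσ3 : ∀ J, IsMaxIntervalOf J X → J.ncard = (σ J).ncard)
    {x : ℕ} (hx : x ∈ X) :
    ∃ a b a', a ≤ x ∧ x ≤ b ∧ RunB X a b ∧ RunB Y a' (a' + (b - a)) ∧
      σ (Set.Icc a b) = Set.Icc a' (a' + (b - a)) ∧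
      (∀ z, a ≤ z → z ≤ b → Tmap X σ z = Part.some (z - a + a')) := by
  obtain ⟨ha, hb, hrun⟩ := runA_spec hX hx
  set a := (runA X x).1
  set b := (runA X x).2
  have hab : a ≤ b := le_trans ha hb
  have hImax : IsMaxIntervalOf (Set.Icc a b) X := run_isMaxInterval hab hrun
  have hσmax := hσ1 _ hImax
  have hσcard := hσ3 _ hImax
  rw [ncard_Icc] at hσcard
  have hσne : (σ (Set.Icc a b)).Nonempty := by
    rw [Set.nonempty_iff_ne_empty]
    intro hc
    rw [hc] at hσcard
    simp at hσcard
    omega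
  obtain ⟨y, hy⟩ := hσne
  obtain ⟨a2, b2, ha2, hb2, hrun2, hσeq⟩ := maxInterval_nonempty_eq_run hY hσmax hy
  have ha2b2 : a2 ≤ b2 := le_trans ha2 hb2
  have hcard2 : (σ (Set.Icc a b)).ncard = b2 + 1 - a2 := by rw [hσeq, ncard_Icc]
  have hb2eq : b2 = a2 + (b - a) := by omega
  refine ⟨a, b, a2, ha, hb, hrun, ?_, ?_, ?_⟩
  · rw [← hb2eq]; exact hrun2
  · rw [← hb2eq]; exact hσeq
  · intro z hza hzb
    have hzX : z ∈ X := hrun.1 ⟨hza, hzb⟩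
    obtain ⟨hza', hzb', hrunz⟩ := runA_spec hX hzX
    obtain ⟨hfst, hsnd⟩ := run_unique hrunz hrun hza' hzb' hza hzb
    rw [Part.eq_some_iff]
    refine Part.mem_mk_iff.2 ⟨hzX, ?_⟩
    rw [hfst, hsnd, hσeq, hb2eq, sInf_Icc (by omega)]

/-- The translation map is a partial automorphism. -/
lemma tmap_isPAut (hX : X ⊆ Set.Icc 1 n) (hY : Y ⊆ Set.Icc 1 n)
    (hσ1 : ∀ J, IsMaxIntervalOf J X → IsMaxIntervalOf (σ J) Y)
    (hσ2 : ∀ J', IsMaxIntervalOf J' Y → ∃! J, IsMaxIntervalOf J X ∧ σ J = J')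
    (hσ3 : ∀ J, IsMaxIntervalOf J X → J.ncard = (σ J).ncard) :
    IsPAut n (Tmap X σ) := by
  -- helper: membership in Tmap gives run data
  have hmem : ∀ {x u : ℕ}, u ∈ Tmap X σ x → ∃ a b a', a ≤ x ∧ x ≤ b ∧ RunB X a b ∧
      RunB Y a' (a' + (b - a)) ∧ σ (Set.Icc a b) = Set.Icc a' (a' + (b - a)) ∧
      u = x - a + a' ∧
      (∀ z, a ≤ z → z ≤ b → Tmap X σ z = Part.some (z - a + a')) := by
    intro x u hu
    have hxX : x ∈ X := (Part.mem_mk_iff.1 hu).1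
    obtain ⟨a, b, a', ha, hb, hr, hr', hσeq, hT⟩ := run_match (σ := σ) hX hY hσ1 hσ3 hxX
    refine ⟨a, b, a', ha, hb, hr, hr', hσeq, ?_, hT⟩
    have := hT x ha hb
    rw [this] at hu
    exact Part.mem_some_iff.1 hu
  -- helper: two runs with equal σ-values are equal
  have hruneq : ∀ {a1 b1 a2 b2 : ℕ}, a1 ≤ b1 → a2 ≤ b2 → RunB X a1 b1 → RunB X a2 b2 →
      σ (Set.Icc a1 b1) = σ (Set.Icc a2 b2) → a1 = a2 ∧ b1 = b2 := by
    intro a1 b1 a2 b2 h1 h2 hr1 hr2 hσeq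
    have hmax1 := run_isMaxInterval h1 hr1
    have hmax2 := run_isMaxInterval h2 hr2
    obtain ⟨J, hJ, huniq⟩ := hσ2 _ (hσ1 _ hmax1)
    have e1 := huniq _ ⟨hmax1, rfl⟩
    have e2 := huniq _ ⟨hmax2, hσeq.symm⟩
    exact icc_eq_icc h1 (e1.trans e2.symm)
  refine ⟨⟨?_, ?_, ?_, ?_⟩, ?_⟩
  · intro x hx
    rw [PFun.mem_dom] at hx
    obtain ⟨u, hu⟩ := hx
    exact hX (Part.mem_mk_iff.1 hu).1
  · rintro u ⟨x, hu⟩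
    obtain ⟨a, b, a', ha, hb, hr, hr', hσeq, hueq, hT⟩ := hmem hu
    apply hY
    apply hr'.1
    exact ⟨by omega, by omega⟩
  · intro x y u hux huy
    obtain ⟨a1, b1, a1', ha1, hb1, hr1, hr1', hσ1eq, hueq1, hT1⟩ := hmem hux
    obtain ⟨a2, b2, a2', ha2, hb2, hr2, hr2', hσ2eq, hueq2, hT2⟩ := hmem huy
    have hu1 : a1' ≤ u ∧ u ≤ a1' + (b1 - a1) := by omega
    have hu2 : a2' ≤ u ∧ u ≤ a2' + (b2 - a2) := by omega
    obtain ⟨hfst, hsnd⟩ := run_unique hr1' hr2' hu1.1 hu1.2 hu2.1 hu2.2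
    have hσeq : σ (Set.Icc a1 b1) = σ (Set.Icc a2 b2) := by
      have hd : b1 - a1 = b2 - a2 := by omega
      rw [hσ1eq, hσ2eq, hfst, hd]
    obtain ⟨hae, hbe⟩ := hruneq (by omega) (by omega) hr1 hr2 hσeq
    omega
  · -- edge
    intro u v a b hu hv huv
    obtain ⟨a1, b1, a1', ha1, hb1, hr1, hr1', hσ1eq, hueq1, hT1⟩ := hmem hu
    obtain ⟨a2, b2, a2', ha2, hb2, hr2, hr2', hσ2eq, hueq2, hT2⟩ := hmem hv
    rcases huv with h1 | h1
    · -- v = u + 1 : v is in the run of u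
      have hvb1 : v ≤ b1 := by
        by_contra hc
        apply hr1.2.2
        have hbv : b1 + 1 = v := by omega
        rw [hbv]
        exact hr2.1 ⟨ha2, hb2⟩
      have hTv := hT1 v (by omega) hvb1
      have hvmem : b ∈ Tmap X σ v := hv
      rw [hTv] at hvmem
      have hb' : b = v - a1 + a1' := Part.mem_some_iff.1 hvmem
      left
      omega
    · -- u = v + 1
      have hub2 : u ≤ b2 := by
        by_contra hc
        apply hr2.2.2
        have hbu : b2 + 1 = u := by omega
        rw [hbu]
        exact hr1.1 ⟨ha1, hb1⟩
      have hTu := hT2 u (by omega) hub2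
      have humem : a ∈ Tmap X σ u := hu
      rw [hTu] at humem
      have ha' : a = u - a2 + a2' := Part.mem_some_iff.1 humem
      right
      omega
  · -- co-edge
    intro u v a b hu hv hab
    obtain ⟨a1, b1, a1', ha1, hb1, hr1, hr1', hσ1eq, hueq1, hT1⟩ := hmem hu
    obtain ⟨a2, b2, a2', ha2, hb2, hr2, hr2', hσ2eq, hueq2, hT2⟩ := hmem hv
    have hsame : a1' = a2' ∧ a1' + (b1 - a1) = a2' + (b2 - a2) := by
      rcases hab with h1 | h1
      · -- b = a + 1, a in run of u's image, b in run of v's image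
        have hba1 : b ≤ a1' + (b1 - a1) := by
          by_contra hc
          apply hr1'.2.2
          have hbY : b ∈ Y := hr2'.1 ⟨by omega, by omega⟩
          have he : a1' + (b1 - a1) + 1 = b := by omega
          rw [he]
          exact hbY
        exact run_unique hr1' hr2' (by omega) hba1 (by omega) (by omega)
      · have hab2 : a ≤ a2' + (b2 - a2) := by
          by_contra hc
          apply hr2'.2.2
          have haY : a ∈ Y := hr1'.1 ⟨by omega, by omega⟩
          have he : a2' + (b2 - a2) + 1 = a := by omega
          rw [he]
          exact haY
        exact run_unique hr1' hr2' (by omega) (by omega) (by omega) hab2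
    have hσeq : σ (Set.Icc a1 b1) = σ (Set.Icc a2 b2) := by
      have hd : b1 - a1 = b2 - a2 := by
        have h1 := hsame.1
        have h2 := hsame.2
        omega
      rw [hσ1eq, hσ2eq, hsame.1, hd]
    obtain ⟨hae, hbe⟩ := hruneq (by omega) (by omega) hr1 hr2 hσeq
    rcases hab with h1 | h1
    · left; omega
    · right; omega

lemma tmap_surj (hX : X ⊆ Set.Icc 1 n) (hY : Y ⊆ Set.Icc 1 n)
    (hσ1 : ∀ J, IsMaxIntervalOf J X → IsMaxIntervalOf (σ J) Y)
    (hσ2 : ∀ J', IsMaxIntervalOf J' Y → ∃! J, IsMaxIntervalOf J X ∧ σ J = J')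
    (hσ3 : ∀ J, IsMaxIntervalOf J X → J.ncard = (σ J).ncard)
    {y : ℕ} (hy : y ∈ Y) : ∃ u, u ∈ X ∧ y ∈ Tmap X σ u := by
  obtain ⟨a2, b2, ha2, hb2, hrun2⟩ := run_exists hY hy
  have hJ'max : IsMaxIntervalOf (Set.Icc a2 b2) Y :=
    run_isMaxInterval (le_trans ha2 hb2) hrun2
  obtain ⟨J, ⟨hJmax, hJσ⟩, -⟩ := hσ2 _ hJ'max
  have hJcard := hσ3 _ hJmax
  rw [hJσ, ncard_Icc] at hJcard
  have hJne : J.Nonempty := by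
    rw [Set.nonempty_iff_ne_empty]
    intro hc
    rw [hc] at hJcard
    simp at hJcard
    omega
  obtain ⟨x0, hx0⟩ := hJne
  obtain ⟨a, b, hax, hxb, hrun, hJeq⟩ := maxInterval_nonempty_eq_run hX hJmax hx0
  obtain ⟨A, B, A', hA, hB, hrA, hrA', hσA, hTA⟩ :=
    run_match (σ := σ) hX hY hσ1 hσ3 (hrun.1 ⟨hax, hxb⟩)
  obtain ⟨hfst, hsnd⟩ := run_unique hrA hrun hA hB hax hxb
  rw [hfst, hsnd] at hσA hTA hrA'
  rw [hJeq] at hJσ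
  rw [hJσ] at hσA
  obtain ⟨hA'a2, hA'b2⟩ := icc_eq_icc (by omega) hσA.symm
  -- y ∈ Icc a2 b2 = Icc A' (A' + (b-a))
  refine ⟨y - a2 + a, hrun.1 ⟨by omega, by omega⟩, ?_⟩
  rw [hTA (y - a2 + a) (by omega) (by omega)]
  rw [Part.mem_some_iff]
  omega

end Tsec

theorem stmt11 (n : ℕ) (α β : ℕ →. ℕ) (hα : IsPAut n α) (hβ : IsPAut n β) :
    (∃ γ γ' δ δ' : ℕ →. ℕ, IsPAut n γ ∧ IsPAut n γ' ∧ IsPAut n δ ∧ IsPAut n δ' ∧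
      α = pcomp (pcomp γ β) γ' ∧ β = pcomp (pcomp δ α) δ') ↔
    (∃ σ : Set ℕ → Set ℕ,
      (∀ J, IsMaxIntervalOf J α.ran → IsMaxIntervalOf (σ J) β.ran) ∧
      (∀ J', IsMaxIntervalOf J' β.ran → ∃! J, IsMaxIntervalOf J α.ran ∧ σ J = J') ∧
      (∀ J, IsMaxIntervalOf J α.ran → J.ncard = (σ J).ncard)) := by
  have hX : α.ran ⊆ Set.Icc 1 n := hα.1.ran_subset
  have hY : β.ran ⊆ Set.Icc 1 n := hβ.1.ran_subset
  constructor
  · rintro ⟨γ, γ', δ, δ', hγ, hγ', hδ, hδ', heq1, heq2⟩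
    have h1 : ∀ k, (cset α.ran k).ncard ≤ (cset β.ran k).ncard := by
      intro k
      refine cset_ncard_le (isPAut_pinv hγ') hX hY ?_ k
      intro y hy
      obtain ⟨x, hx⟩ := hy
      rw [heq1] at hx
      obtain ⟨c, hc, hyc⟩ := mem_pcomp.1 hx
      obtain ⟨w, hw, hcw⟩ := mem_pcomp.1 hc
      exact ⟨c, (mem_pinv hγ'.1.inj).2 hyc, ⟨w, hcw⟩⟩
    have h2 : ∀ k, (cset β.ran k).ncard ≤ (cset α.ran k).ncard := by
      intro k
      refine cset_ncard_le (isPAut_pinv hδ') hY hX ?_ k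
      intro y hy
      obtain ⟨x, hx⟩ := hy
      rw [heq2] at hx
      obtain ⟨c, hc, hyc⟩ := mem_pcomp.1 hx
      obtain ⟨w, hw, hcw⟩ := mem_pcomp.1 hc
      exact ⟨c, (mem_pinv hδ'.1.inj).2 hyc, ⟨w, hcw⟩⟩
    exact sigma_exists hX hY
      (nset_ncard_eq hX hY (fun k => le_antisymm (h1 k) (h2 k)))
  · rintro ⟨σ, hσ1, hσ2, hσ3⟩
    set T := Tmap α.ran σ with hTdef
    have hT : IsPAut n T := tmap_isPAut hX hY hσ1 hσ2 hσ3
    refine ⟨pcomp (pcomp α T) (pinv β), pinv T, pcomp (pcomp β (pinv T)) (pinv α), T,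
      isPAut_pcomp (isPAut_pcomp hα hT) (isPAut_pinv hβ), isPAut_pinv hT,
      isPAut_pcomp (isPAut_pcomp hβ (isPAut_pinv hT)) (isPAut_pinv hα), hT, ?_, ?_⟩
    · -- α = pcomp (pcomp γ β) γ'
      apply PFun.ext
      intro x y
      constructor
      · intro hy
        have hyX : y ∈ α.ran := ⟨x, hy⟩
        obtain ⟨a, b, a', ha, hb, hr, hr', hσeq, hTv⟩ :=
          run_match (σ := σ) hX hY hσ1 hσ3 hyX
        have hTy : (y - a + a') ∈ T y := by
          rw [hTdef, hTv y ha hb]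
          exact Part.mem_some_iff.2 rfl
        have huY : (y - a + a') ∈ β.ran := hr'.1 ⟨by omega, by omega⟩
        obtain ⟨w, hw⟩ := huY
        refine mem_pcomp.2 ⟨y - a + a', mem_pcomp.2 ⟨w, ?_, hw⟩, ?_⟩
        · exact mem_pcomp.2 ⟨y - a + a', mem_pcomp.2 ⟨y, hy, hTy⟩,
            (mem_pinv hβ.1.inj).2 hw⟩
        · exact (mem_pinv hT.1.inj).2 hTy
      · intro hy
        obtain ⟨c, hc, hyc⟩ := mem_pcomp.1 hy
        obtain ⟨w, hwγ, hcw⟩ := mem_pcomp.1 hc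
        obtain ⟨u, huαT, hwβinv⟩ := mem_pcomp.1 hwγ
        obtain ⟨v, hvα, huT⟩ := mem_pcomp.1 huαT
        have huβw : u ∈ β w := mem_pinv_of hwβinv
        have hcu : c = u := Part.mem_unique hcw huβw
        have huTy : u ∈ T y := mem_pinv_of (hcu ▸ hyc)
        have hvy : v = y := hT.1.inj huT huTy
        exact hvy ▸ hvα
    · -- β = pcomp (pcomp δ α) δ'
      apply PFun.ext
      intro x y
      constructor
      · intro hy
        have hyY : y ∈ β.ran := ⟨x, hy⟩
        obtain ⟨u, huX, hyTu⟩ := tmap_surj hX hY hσ1 hσ2 hσ3 hyY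
        obtain ⟨w, hw⟩ := huX
        refine mem_pcomp.2 ⟨u, mem_pcomp.2 ⟨w, ?_, hw⟩, hyTu⟩
        exact mem_pcomp.2 ⟨u, mem_pcomp.2 ⟨y, hy, (mem_pinv hT.1.inj).2 hyTu⟩,
          (mem_pinv hα.1.inj).2 hw⟩
      · intro hy
        obtain ⟨c, hc, hyT⟩ := mem_pcomp.1 hy
        obtain ⟨w, hwδ, hcα⟩ := mem_pcomp.1 hc
        obtain ⟨u, huβT, hwαinv⟩ := mem_pcomp.1 hwδ
        obtain ⟨v, hvβ, huTinv⟩ := mem_pcomp.1 huβT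
        have hvTu : v ∈ T u := mem_pinv_of huTinv
        have huαw : u ∈ α w := mem_pinv_of hwαinv
        have hcu : c = u := Part.mem_unique hcα huαw
        have hyTu : y ∈ T u := hcu ▸ hyT
        have hvy : v = y := Part.mem_unique hvTu hyTu
        exact hvy ▸ hvβ
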